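/- Let X be a CAT(0) space, let c₁ : ℝ → X and c₂ : ℝ → X be geodesic lines, and let g₁, g₂ be isometries of X with g₁(c₁(t)) = c₁(t+a) and g₂(c₂(t)) = c₂(t+b) for all t ∈ ℝ, where a, b > 0. Let π₁, π₂ be the orthogonal projections onto c₁(ℝ) and c₂(ℝ), and set X₁ = π₁⁻¹(c₁((−∞,0] ∪ [a,∞))), X₂ = π₂⁻¹(c₂((−∞,0] ∪ [b,∞))). If X₁ ∩ X₂ = ∅, then g₁ and g₂ generate a free group of rank two. -/
import Mathlib


open Metric Set Filter MeasureTheory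

noncomputable def compAngle {X : Type*} [MetricSpace X] (p a b : X) : ℝ :=
  Real.arccos ((dist p a ^ 2 + dist p b ^ 2 - dist a b ^ 2) / (2 * dist p a * dist p b))

def IsGeodesicSegment {X : Type*} [MetricSpace X] (f : ℝ → X) (x y : X) : Prop :=
  f 0 = x ∧ f (dist x y) = y ∧
    ∀ s ∈ Set.Icc (0 : ℝ) (dist x y), ∀ t ∈ Set.Icc (0 : ℝ) (dist x y),
      dist (f s) (f t) = |s - t|

def IsGeodesicRay {X : Type*} [MetricSpace X] (c : ℝ → X) : Prop :=
  ∀ s ∈ Set.Ici (0 : ℝ), ∀ t ∈ Set.Ici (0 : ℝ), dist (c s) (c t) = |s - t|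

/-- CAT(0): a complete geodesic space satisfying the CN (Bruhat–Tits) comparison
inequality for midpoints, which is equivalent to the triangle comparison property. -/
def IsCAT0 (X : Type*) [MetricSpace X] : Prop :=
  (∀ x y : X, ∃ f : ℝ → X, IsGeodesicSegment f x y) ∧
  ∀ x y z m : X, dist y m = dist y z / 2 → dist z m = dist y z / 2 →
    dist x m ^ 2 ≤ dist x y ^ 2 / 2 + dist x z ^ 2 / 2 - dist y z ^ 2 / 4

/-- `a` lies on the (unique, in a CAT(0) space) geodesic segment from `p` to `x`. -/
def MetricBetween {X : Type*} [MetricSpace X] (p a x : X) : Prop :=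
  dist p a + dist a x = dist p x

/-- The Alexandrov angle at `p` between the segments `px` and `py`; in a CAT(0) space
the comparison angles are monotone, so the limit equals the infimum. -/
noncomputable def alexAngle {X : Type*} [MetricSpace X] (p x y : X) : ℝ :=
  sInf {θ : ℝ | ∃ a b : X, MetricBetween p a x ∧ MetricBetween p b y ∧
    a ≠ p ∧ b ≠ p ∧ θ = compAngle p a b}

def ConvexSubset {X : Type*} [MetricSpace X] (A : Set X) : Prop :=
  ∀ x ∈ A, ∀ y ∈ A, ∀ f : ℝ → X, IsGeodesicSegment f x y →
    ∀ t ∈ Set.Icc (0 : ℝ) (dist x y), f t ∈ A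

/-- Geometric Ping-Pong (Lemma 5.3): if the two "outer" preimage sets of the
axis projections are disjoint, then the two hyperbolic isometries generate a free
group of rank two (the lift from the free group on two generators is injective). -/
instance isometryEquivMulActionAux {α : Type*} [MetricSpace α] : MulAction (α ≃ᵢ α) α where
  smul g x := g x
  one_smul _ := rfl
  mul_smul _ _ _ := rfl

@[simp] lemma isometryEquiv_smul_def {α : Type*} [MetricSpace α] (g : α ≃ᵢ α) (x : α) :
    g • x = g x := rfl

lemma nearest_unique_aux {X : Type*} [MetricSpace X] (hX : IsCAT0 X) (c : ℝ → X)
    (h : ∀ s t : ℝ, dist (c s) (c t) = |s - t|) (x : X) (s u : ℝ)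
    (hs : ∀ t, dist x (c s) ≤ dist x (c t)) (hu : ∀ t, dist x (c u) ≤ dist x (c t)) :
    s = u := by
  have hd : dist x (c u) = dist x (c s) := le_antisymm (hu s) (hs u)
  have hm1 : dist (c s) (c ((s + u) / 2)) = dist (c s) (c u) / 2 := by
    rw [h, h]
    have e : s - (s + u) / 2 = (s - u) / 2 := by ring
    rw [e, abs_div, abs_two]
  have hm2 : dist (c u) (c ((s + u) / 2)) = dist (c s) (c u) / 2 := by
    rw [h, h]
    have e : u - (s + u) / 2 = (u - s) / 2 := by ring
    rw [e, abs_div, abs_two, abs_sub_comm]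
  have hcn := hX.2 x (c s) (c u) (c ((s + u) / 2)) hm1 hm2
  have hmin : dist x (c s) ≤ dist x (c ((s + u) / 2)) := hs _
  have h1 : dist x (c s) ^ 2 ≤ dist x (c ((s + u) / 2)) ^ 2 :=
    pow_le_pow_left₀ dist_nonneg hmin 2
  rw [hd] at hcn
  have h2 : dist (c s) (c u) ^ 2 ≤ 0 := by linarith
  have h3 : dist (c s) (c u) ≤ 0 := by nlinarith [@dist_nonneg _ _ (c s) (c u)]
  have h4 := le_antisymm h3 (@dist_nonneg _ _ (c s) (c u))
  rw [h] at h4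
  exact sub_eq_zero.mp (abs_eq_zero.mp h4)

lemma line_setup_aux {X : Type*} [MetricSpace X] (hX : IsCAT0 X) (c : ℝ → X)
    (h : ∀ s t : ℝ, dist (c s) (c t) = |s - t|) (g : X ≃ᵢ X) (a : ℝ)
    (hg : ∀ t : ℝ, g (c t) = c (t + a)) (proj : X → X)
    (hproj : ∀ x : X, (∃ t : ℝ, proj x = c t) ∧ ∀ t : ℝ, dist x (proj x) ≤ dist x (c t)) :
    ∃ τ : X → ℝ, (∀ x, proj x = c (τ x)) ∧ (∀ s, τ (c s) = s) ∧
      (∀ x, τ (g x) = τ x + a) ∧ (∀ x, τ (g⁻¹ x) = τ x - a) := by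
  classical
  refine ⟨fun x => Classical.choose (hproj x).1, fun x => Classical.choose_spec (hproj x).1,
    ?_, ?_, ?_⟩ <;> intro x
  · -- τ (c x) = x
    refine nearest_unique_aux hX c h (c x) _ x (fun t => ?_) (fun t => ?_)
    · rw [← Classical.choose_spec (hproj (c x)).1]; exact (hproj (c x)).2 t
    · rw [dist_self]; exact dist_nonneg
  · -- τ (g x) = τ x + a
    refine nearest_unique_aux hX c h (g x) _ _ (fun t => ?_) (fun t => ?_)
    · rw [← Classical.choose_spec (hproj (g x)).1]; exact (hproj (g x)).2 t
    · have e1 : c (Classical.choose (hproj x).1 + a) = g (c (Classical.choose (hproj x).1)) :=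
        (hg _).symm
      have e2 : c t = g (c (t - a)) := by rw [hg, sub_add_cancel]
      rw [e1, e2, g.dist_eq, g.dist_eq, ← Classical.choose_spec (hproj x).1]
      exact (hproj x).2 _
  · -- τ (g⁻¹ x) = τ x - a
    refine nearest_unique_aux hX c h (g⁻¹ x) _ _ (fun t => ?_) (fun t => ?_)
    · rw [← Classical.choose_spec (hproj (g⁻¹ x)).1]; exact (hproj (g⁻¹ x)).2 t
    · have e1 : c (Classical.choose (hproj x).1 - a) = g⁻¹ (c (Classical.choose (hproj x).1)) := by
        have : g (c (Classical.choose (hproj x).1 - a)) = c (Classical.choose (hproj x).1) := by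
          rw [hg, sub_add_cancel]
        rw [← this, IsometryEquiv.inv_apply_self]
      have e2 : c t = g⁻¹ (c (t + a)) := by rw [← hg, IsometryEquiv.inv_apply_self]
      rw [e1, e2, (g⁻¹).dist_eq, (g⁻¹).dist_eq, ← Classical.choose_spec (hproj x).1]
      exact (hproj x).2 _

theorem stmt_16 {X : Type*} [MetricSpace X] [CompleteSpace X] (hX : IsCAT0 X)
    (c₁ c₂ : ℝ → X)
    (h₁ : ∀ s t : ℝ, dist (c₁ s) (c₁ t) = |s - t|)
    (h₂ : ∀ s t : ℝ, dist (c₂ s) (c₂ t) = |s - t|)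
    (g₁ g₂ : X ≃ᵢ X) (a b : ℝ) (ha : 0 < a) (hb : 0 < b)
    (hg₁ : ∀ t : ℝ, g₁ (c₁ t) = c₁ (t + a))
    (hg₂ : ∀ t : ℝ, g₂ (c₂ t) = c₂ (t + b))
    (proj₁ proj₂ : X → X)
    (hproj₁ : ∀ x : X, (∃ t : ℝ, proj₁ x = c₁ t) ∧ ∀ t : ℝ, dist x (proj₁ x) ≤ dist x (c₁ t))
    (hproj₂ : ∀ x : X, (∃ t : ℝ, proj₂ x = c₂ t) ∧ ∀ t : ℝ, dist x (proj₂ x) ≤ dist x (c₂ t))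
    (hdisj : {x : X | ∃ t : ℝ, proj₁ x = c₁ t ∧ (t ≤ 0 ∨ a ≤ t)} ∩
             {x : X | ∃ t : ℝ, proj₂ x = c₂ t ∧ (t ≤ 0 ∨ b ≤ t)} = ∅) :
    Function.Injective
      ⇑(FreeGroup.lift (fun i : Bool => if i then g₁ else g₂)) := by
  classical
  obtain ⟨τ₁, hτ₁p, hτ₁c, hτ₁g, hτ₁gi⟩ := line_setup_aux hX c₁ h₁ g₁ a hg₁ proj₁ hproj₁
  obtain ⟨τ₂, hτ₂p, hτ₂c, hτ₂g, hτ₂gi⟩ := line_setup_aux hX c₂ h₂ g₂ b hg₂ proj₂ hproj₂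
  have hc₁inj : Function.Injective c₁ := by
    intro s t hst
    have h := h₁ s t; rw [hst, dist_self] at h
    exact sub_eq_zero.mp (abs_eq_zero.mp h.symm)
  have hc₂inj : Function.Injective c₂ := by
    intro s t hst
    have h := h₂ s t; rw [hst, dist_self] at h
    exact sub_eq_zero.mp (abs_eq_zero.mp h.symm)
  have hdisj' : ∀ x : X, (τ₁ x ≤ 0 ∨ a ≤ τ₁ x) → (τ₂ x ≤ 0 ∨ b ≤ τ₂ x) → False := by
    intro x hx1 hx2
    have hx : x ∈ ({x : X | ∃ t : ℝ, proj₁ x = c₁ t ∧ (t ≤ 0 ∨ a ≤ t)} ∩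
        {x : X | ∃ t : ℝ, proj₂ x = c₂ t ∧ (t ≤ 0 ∨ b ≤ t)}) :=
      ⟨⟨τ₁ x, hτ₁p x, hx1⟩, ⟨τ₂ x, hτ₂p x, hx2⟩⟩
    rw [hdisj] at hx
    exact hx
  set A : Bool → Set X := fun i => if i then {x | a ≤ τ₁ x} else {x | b ≤ τ₂ x} with hA
  set B : Bool → Set X := fun i => if i then {x | τ₁ x ≤ 0} else {x | τ₂ x ≤ 0} with hB
  have key : Function.Injective
      ⇑(FreeGroup.lift (fun i : ULift Bool => if i.down then g₁ else g₂)) := by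
    refine FreeGroup.injective_lift_of_ping_pong (fun i : ULift Bool => if i.down then g₁ else g₂)
      (fun i => A i.down) (fun i => B i.down) ?_ ?_ ?_ ?_ ?_ ?_
    · rintro ⟨i⟩
      cases i
      · exact ⟨c₂ b, by simp [hA, hτ₂c]⟩
      · exact ⟨c₁ a, by simp [hA, hτ₁c]⟩
    · rintro ⟨i⟩ ⟨j⟩ hij
      have key : Disjoint (A true) (A false) := by
        rw [Set.disjoint_left]
        intro x hx1 hx2
        simp only [hA, Bool.false_eq_true, eq_self_iff_true, if_true, if_false, Set.mem_setOf_eq] at hx1 hx2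
        exact hdisj' x (Or.inr hx1) (Or.inr hx2)
      cases i <;> cases j
      · exact absurd rfl hij
      · exact key.symm
      · exact key
      · exact absurd rfl hij
    · rintro ⟨i⟩ ⟨j⟩ hij
      have key : Disjoint (B true) (B false) := by
        rw [Set.disjoint_left]
        intro x hx1 hx2
        simp only [hB, Bool.false_eq_true, eq_self_iff_true, if_true, if_false, Set.mem_setOf_eq] at hx1 hx2
        exact hdisj' x (Or.inl hx1) (Or.inl hx2)
      cases i <;> cases j
      · exact absurd rfl hij
      · exact key.symm
      · exact key
      · exact absurd rfl hij
    · rintro ⟨i⟩ ⟨j⟩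
      rw [Set.disjoint_left]
      intro x hx1 hx2
      cases i <;> cases j <;>
        simp only [hA, hB, Bool.false_eq_true, eq_self_iff_true, if_true, if_false, Set.mem_setOf_eq] at hx1 hx2
      · linarith
      · exact hdisj' x (Or.inl hx2) (Or.inr hx1)
      · exact hdisj' x (Or.inr hx1) (Or.inl hx2)
      · linarith
    · rintro ⟨i⟩
      cases i
      · rintro x ⟨y, hy, rfl⟩
        simp only [hB, Bool.false_eq_true, eq_self_iff_true, if_true, if_false, Set.mem_compl_iff, Set.mem_setOf_eq, not_le] at hy
        simp only [hA, Bool.false_eq_true, eq_self_iff_true, if_true, if_false, Set.mem_setOf_eq, isometryEquiv_smul_def]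
        rw [hτ₂g y]
        linarith
      · rintro x ⟨y, hy, rfl⟩
        simp only [hB, Bool.false_eq_true, eq_self_iff_true, if_true, if_false, Set.mem_compl_iff, Set.mem_setOf_eq, not_le] at hy
        simp only [hA, Bool.false_eq_true, eq_self_iff_true, if_true, if_false, Set.mem_setOf_eq, isometryEquiv_smul_def]
        rw [hτ₁g y]
        linarith
    · rintro ⟨i⟩
      cases i
      · rintro x ⟨y, hy, rfl⟩
        simp only [hA, Bool.false_eq_true, eq_self_iff_true, if_true, if_false, Set.mem_compl_iff, Set.mem_setOf_eq, not_le] at hy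
        simp only [hB, Bool.false_eq_true, eq_self_iff_true, if_true, if_false, Set.mem_setOf_eq, Pi.inv_apply, isometryEquiv_smul_def]
        rw [hτ₂gi y]
        linarith
      · rintro x ⟨y, hy, rfl⟩
        simp only [hA, Bool.false_eq_true, eq_self_iff_true, if_true, if_false, Set.mem_compl_iff, Set.mem_setOf_eq, not_le] at hy
        simp only [hB, Bool.false_eq_true, eq_self_iff_true, if_true, if_false, Set.mem_setOf_eq, Pi.inv_apply, isometryEquiv_smul_def]
        rw [hτ₁gi y]
        linarith
  have heq : (FreeGroup.lift (fun i : Bool => if i then g₁ else g₂)) =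
      (FreeGroup.lift (fun i : ULift Bool => if i.down then g₁ else g₂)).comp
        (FreeGroup.freeGroupCongr (Equiv.ulift.symm : Bool ≃ ULift Bool)).toMonoidHom := by
    ext i
    simp
  rw [heq]
  exact key.comp (FreeGroup.freeGroupCongr _).injective
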